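/- Let n, m be positive natural numbers. The assignment sending a linear map 𝓔 : Matrix (Fin n) (Fin n) ℂ →ₗ[ℂ] Matrix (Fin m) (Fin m) ℂ to its Choi matrix σ_𝓔 := ∑_{i,j} E_{ij} ⊗ 𝓔(E_{ij}) ∈ Matrix (Fin n × Fin m) (Fin n × Fin m) ℂ is a ℂ-linear equivalence between the space of linear maps from Matrix (Fin n) (Fin n) ℂ to Matrix (Fin m) (Fin m) ℂ and Matrix (Fin n × Fin m) (Fin n × Fin m) ℂ. -/

import Mathlib

open Matrix Kronecker

noncomputable def choiFwd (n m : ℕ) :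
    (Matrix (Fin n) (Fin n) ℂ →ₗ[ℂ] Matrix (Fin m) (Fin m) ℂ) →ₗ[ℂ]
      Matrix (Fin n × Fin m) (Fin n × Fin m) ℂ where
  toFun 𝓔 := ∑ i : Fin n, ∑ j : Fin n,
    (Matrix.single i j (1 : ℂ)) ⊗ₖ 𝓔 (Matrix.single i j (1 : ℂ))
  map_add' 𝓔 𝓕 := by
    ext ⟨a, k⟩ ⟨b, l⟩
    simp [Matrix.sum_apply, Matrix.kroneckerMap, mul_add, Finset.sum_add_distrib]
  map_smul' c 𝓔 := by
    ext ⟨a, k⟩ ⟨b, l⟩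
    simp [Matrix.sum_apply, Matrix.kroneckerMap, Finset.mul_sum, mul_comm, mul_assoc,
      mul_left_comm]

noncomputable def choiBwd (n m : ℕ) :
    Matrix (Fin n × Fin m) (Fin n × Fin m) ℂ →ₗ[ℂ]
      (Matrix (Fin n) (Fin n) ℂ →ₗ[ℂ] Matrix (Fin m) (Fin m) ℂ) where
  toFun M :=
    { toFun := fun A => Matrix.of fun k l => ∑ i : Fin n, ∑ j : Fin n, A i j * M (i, k) (j, l)
      map_add' := fun A B => by
        ext k l
        simp [add_mul, Finset.sum_add_distrib]
      map_smul' := fun c A => by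
        ext k l
        simp [Finset.mul_sum, mul_assoc] }
  map_add' M N := by
    ext A k l
    simp [mul_add, Finset.sum_add_distrib]
  map_smul' c M := by
    ext A k l
    simp [Finset.mul_sum, mul_comm, mul_assoc, mul_left_comm]

theorem choi_jamiolkowski_equiv (n m : ℕ) (hn : 0 < n) (hm : 0 < m) :
    ∃ L : (Matrix (Fin n) (Fin n) ℂ →ₗ[ℂ] Matrix (Fin m) (Fin m) ℂ) ≃ₗ[ℂ]
          Matrix (Fin n × Fin m) (Fin n × Fin m) ℂ,
      ∀ 𝓔 : Matrix (Fin n) (Fin n) ℂ →ₗ[ℂ] Matrix (Fin m) (Fin m) ℂ,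
        L 𝓔 = ∑ i : Fin n, ∑ j : Fin n,
          (Matrix.single i j (1 : ℂ)) ⊗ₖ 𝓔 (Matrix.single i j (1 : ℂ)) := by
  have key : ∀ (𝓔 : Matrix (Fin n) (Fin n) ℂ →ₗ[ℂ] Matrix (Fin m) (Fin m) ℂ)
      (i j : Fin n) (k l : Fin m),
      (choiFwd n m 𝓔) (i, k) (j, l) = 𝓔 (Matrix.single i j 1) k l := by
    intro 𝓔 i j k l
    simp [choiFwd, Matrix.sum_apply, Matrix.kroneckerMap, Matrix.single, ite_and,
      Finset.sum_ite_eq, Finset.sum_ite_eq']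
  refine ⟨LinearEquiv.ofLinear (choiFwd n m) (choiBwd n m) ?_ ?_, fun 𝓔 => rfl⟩
  · ext M ⟨a, k⟩ ⟨b, l⟩
    rw [LinearMap.comp_apply, key]
    simp [choiBwd, Matrix.single, ite_and, Finset.sum_ite_eq, Finset.sum_ite_eq']
  · ext 𝓔 A k l
    rw [LinearMap.comp_apply]
    have lhs : (choiBwd n m (choiFwd n m 𝓔)) A k l
        = ∑ i : Fin n, ∑ j : Fin n, A i j * 𝓔 (Matrix.single i j 1) k l := by
      simp only [choiBwd, LinearMap.coe_mk, AddHom.coe_mk, Matrix.of_apply]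
      exact Finset.sum_congr rfl fun i _ => Finset.sum_congr rfl fun j _ => by rw [key]
    rw [lhs, LinearMap.id_apply]
    conv_rhs => rw [Matrix.matrix_eq_sum_single A]
    rw [map_sum, Matrix.sum_apply]
    refine Finset.sum_congr rfl fun i _ => ?_
    rw [map_sum, Matrix.sum_apply]
    refine Finset.sum_congr rfl fun j _ => ?_
    rw [show Matrix.single i j (A i j) = A i j • Matrix.single i j 1 by
      simp [Matrix.smul_single], _root_.map_smul, Matrix.smul_apply, smul_eq_mul]
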